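/- Let σ be an n-simplex (n ≥ 1) in a Euclidean space, let F_i be the facet opposite vertex v_i, and write c = c(σ), c_i = c(F_i), R = R(σ). If x is any point with dist(x, c) = R and ⟪x − c_i, c − c_i⟫ > 0 (i.e., x lies on the circumsphere of σ and strictly on the same side of the hyperplane affineSpan(F_i) as the circumcenter c), then dist(x, c_i) > R(F_i), i.e., x lies strictly outside the equatorial ball of F_i. -/

import Mathlib

open EuclideanGeometry RealInnerProductSpace

variable {E : Type*} [NormedAddCommGroup E] [InnerProductSpace ℝ E] [FiniteDimensional ℝ E]

/-- The facet of an `(n+1)`-simplex opposite vertex `i`. -/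
noncomputable def Affine.Simplex.facetOpp {n : ℕ} (σ : Affine.Simplex ℝ E (n + 1))
    (i : Fin (n + 2)) : Affine.Simplex ℝ E n :=
  σ.face (fs := {i}ᶜ)
    (by rw [Finset.card_compl, Finset.card_singleton, Fintype.card_fin]; rfl)

/-- A simplex is well-centered if its circumcenter is a positive affine
combination of its vertices, i.e. lies in the interior of the simplex. -/
def Affine.Simplex.WellCentered {n : ℕ} (σ : Affine.Simplex ℝ E n) : Prop :=
  ∃ w : Fin (n + 1) → ℝ, (∀ j, 0 < w j) ∧ (∑ j, w j = 1) ∧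
    σ.circumcenter = Finset.univ.affineCombination ℝ σ.points w

/-- The signed distance from the circumcenter of `σ` to the hyperplane spanned by the
facet opposite vertex `i`, positive when the circumcenter is on the same side as vertex `i`. -/
noncomputable def Affine.Simplex.signedDist {n : ℕ} (σ : Affine.Simplex ℝ E (n + 1))
    (i : Fin (n + 2)) : ℝ :=
  ⟪σ.circumcenter - ((σ.facetOpp i).circumcenter : E),
      σ.points i - (((σ.facetOpp i).orthogonalProjectionSpan (σ.points i) : E))⟫ /
    ‖σ.points i - (((σ.facetOpp i).orthogonalProjectionSpan (σ.points i) : E))‖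

/-- A point of the circumsphere of `σ` strictly on the same side of the
hyperplane of the facet opposite vertex `i` as the circumcenter lies strictly outside
the equatorial ball of that facet. -/
theorem dist_gt_circumradius_facet_of_mem_sphere_of_same_side {n : ℕ}
    (σ : Affine.Simplex ℝ E (n + 1)) (i : Fin (n + 2)) (x : E)
    (hx : dist x σ.circumcenter = σ.circumradius)
    (hside : ⟪x - ((σ.facetOpp i).circumcenter : E),
      σ.circumcenter - (σ.facetOpp i).circumcenter⟫ > 0) :
    dist x (σ.facetOpp i).circumcenter > (σ.facetOpp i).circumradius := by
  set F := σ.facetOpp i with hF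
  have hproj : ↑(F.orthogonalProjectionSpan σ.circumcenter) = F.circumcenter :=
    σ.orthogonalProjection_circumcenter _
  have hmem : F.points 0 ∈ affineSpan ℝ (Set.range F.points) :=
    mem_affineSpan ℝ (Set.mem_range_self _)
  have hpyth := F.dist_sq_eq_dist_orthogonalProjection_sq_add_dist_orthogonalProjection_sq
    (p₁ := F.points 0) σ.circumcenter hmem
  rw [hproj] at hpyth
  have h1 : dist (F.points 0) σ.circumcenter = σ.circumradius := by
    simp [hF, Affine.Simplex.facetOpp, Affine.Simplex.face_points]
  have h2 : dist (F.points 0) F.circumcenter = F.circumradius :=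
    F.dist_circumcenter_eq_circumradius 0
  rw [h1, h2] at hpyth
  set u := x - σ.circumcenter with hu
  set v := σ.circumcenter - (F.circumcenter : E) with hv
  have hxv : x - (F.circumcenter : E) = u + v := by rw [hu, hv]; abel
  have hside' : ⟪u, v⟫ + ‖v‖ ^ 2 > 0 := by
    have := hside
    rw [show x - ((σ.facetOpp i).circumcenter : E) = u + v from hxv,
      inner_add_left, real_inner_self_eq_norm_sq] at this
    exact this
  have hnu : ‖u‖ = σ.circumradius := by rw [hu, ← dist_eq_norm]; exact hx
  have hnv : ‖v‖ = dist σ.circumcenter (F.circumcenter : E) := (dist_eq_norm _ _).symm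
  have hdx : dist x (F.circumcenter : E) = ‖u + v‖ := by rw [dist_eq_norm, hxv]
  have hsq : ‖u + v‖ ^ 2 = ‖u‖ ^ 2 + 2 * ⟪u, v⟫ + ‖v‖ ^ 2 := norm_add_sq_real u v
  have hrn : F.circumradius ≥ 0 := F.circumradius_nonneg
  have hgt : F.circumradius ^ 2 < dist x (F.circumcenter : E) ^ 2 := by
    have hnv2 : ‖v‖ ^ 2 = dist σ.circumcenter (F.circumcenter : E) *
        dist σ.circumcenter (F.circumcenter : E) := by rw [hnv]; ring
    rw [hdx, hsq, hnu]
    nlinarith [hpyth, hside', hnv2]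
  have := dist_nonneg (x := x) (y := (F.circumcenter : E))
  nlinarith [hgt, hrn, this]
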